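/- Let s = σ + it be a complex number with 0 < σ < 1 and |t| > 1, and let a ∈ (0,1). Then the radial Abel means of the series ∑_{k≥1} k^{-s} e^{2πika} converge to F_s(a): lim_{r→1⁻} ∑_{k=1}^∞ k^{-s} r^k e^{2πika} = F_s(a). -/

import Mathlib

open MeasureTheory Complex Real Set Filter

/-- The periodized zeta function `F s a`, i.e. the analytic continuation in `s` of
`∑ k ≥ 1, exp (2πika) / k ^ s`, realized as Mathlib's `expZeta` at the point `a` of the
unit additive circle. -/
noncomputable def periodizedZeta (s : ℂ) (a : ℝ) : ℂ := HurwitzZeta.expZeta (a : UnitAddCircle) s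

lemma pz_exp_ne_one {a : ℝ} (ha : a ∈ Set.Ioo (0 : ℝ) 1) :
    Complex.exp (2 * π * Complex.I * a) ≠ 1 := by
  intro h
  rw [Complex.exp_eq_one_iff] at h
  obtain ⟨n, hn⟩ := h
  have h2 : (2 * (π : ℂ) * Complex.I) ≠ 0 := by
    simp [Real.pi_ne_zero, Complex.I_ne_zero]
  have : (a : ℂ) = (n : ℂ) := by
    have : (2 * (π : ℂ) * Complex.I) * a = (2 * (π : ℂ) * Complex.I) * n := by
      rw [hn]; ring
    exact mul_left_cancel₀ h2 this
  have ha' : a = (n : ℝ) := by exact_mod_cast this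
  obtain ⟨h0, h1⟩ := ha
  rw [ha'] at h0 h1
  have : (0 : ℤ) < n := by exact_mod_cast h0
  have : n < 1 := by exact_mod_cast h1
  omega

lemma pz_norm_exp {a : ℝ} : ‖Complex.exp (2 * π * Complex.I * a)‖ = 1 := by
  rw [Complex.norm_exp]
  have : (2 * (π : ℂ) * Complex.I * a).re = 0 := by simp [Complex.mul_re]
  rw [this, Real.exp_zero]

lemma pz_geom_bound {a : ℝ} (ha : a ∈ Set.Ioo (0 : ℝ) 1) (n : ℕ) :
    ‖∑ i ∈ Finset.range n, Complex.exp (2 * π * Complex.I * a) ^ i‖ ≤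
      2 / ‖Complex.exp (2 * π * Complex.I * a) - 1‖ := by
  set w := Complex.exp (2 * π * Complex.I * a) with hw
  have hw1 : w ≠ 1 := pz_exp_ne_one ha
  have hwn : w - 1 ≠ 0 := sub_ne_zero.mpr hw1
  rw [geom_sum_eq hw1, norm_div]
  gcongr
  calc ‖w ^ n - 1‖ ≤ ‖w ^ n‖ + ‖(1 : ℂ)‖ := norm_sub_le _ _
    _ = 2 := by rw [norm_pow, pz_norm_exp]; norm_num

lemma pz_cpow_diff_bound {s : ℂ} (hs : 0 < s.re) {k : ℕ} (hk : 1 ≤ k) :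
    ‖((k : ℕ) + 1 : ℂ) ^ (-s) - (k : ℂ) ^ (-s)‖ ≤ ‖s‖ * (k : ℝ) ^ (-s.re - 1) := by
  have hs0 : s ≠ 0 := fun h => by simp [h] at hs
  have hk0 : (0 : ℝ) < k := by exact_mod_cast hk
  set f : ℝ → ℂ := fun x => (x : ℂ) ^ (-s) with hf
  set f' : ℝ → ℂ := fun x => -s * (x : ℂ) ^ (-s - 1) with hf'
  have hderiv : ∀ x ∈ Set.Icc (k : ℝ) ((k : ℝ) + 1),
      HasDerivWithinAt f (f' x) (Set.Icc (k : ℝ) ((k : ℝ) + 1)) x := by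
    intro x hx
    have hx0 : (0 : ℝ) < x := lt_of_lt_of_le hk0 hx.1
    have h1 : HasDerivAt (fun y : ℝ => (y : ℂ) ^ ((-s - 1) + 1) / ((-s - 1) + 1))
        ((x : ℂ) ^ (-s - 1)) x :=
      hasDerivAt_ofReal_cpow_const' hx0.ne' (by
        intro h
        apply hs0
        have : (-s - 1 : ℂ) + 1 = -1 + 1 := by rw [h]
        simp only [neg_add_cancel] at this
        have : -s = 0 := by linear_combination this
        simpa [neg_eq_zero] using this)
    have h2 := h1.const_mul (-s)
    have h3 : HasDerivAt f (f' x) x := by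
      refine h2.congr_of_eventuallyEq (Filter.Eventually.of_forall fun y => ?_) |>.congr_deriv ?_
      · show (y : ℂ) ^ (-s) = -s * ((y : ℂ) ^ ((-s - 1) + 1) / ((-s - 1) + 1))
        have : (-s - 1 : ℂ) + 1 = -s := by ring
        rw [this]
        field_simp
      · ring
    exact h3.hasDerivWithinAt
  have hbound : ∀ x ∈ Set.Icc (k : ℝ) ((k : ℝ) + 1), ‖f' x‖ ≤ ‖s‖ * (k : ℝ) ^ (-s.re - 1) := by
    intro x hx
    have hx0 : (0 : ℝ) < x := lt_of_lt_of_le hk0 hx.1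
    rw [hf', norm_mul, norm_neg]
    gcongr
    rw [Complex.norm_cpow_eq_rpow_re_of_pos hx0]
    have : (-s - 1 : ℂ).re = -s.re - 1 := by simp
    rw [this]
    exact Real.rpow_le_rpow_of_nonpos hk0 hx.1 (by linarith)
  have key := Convex.norm_image_sub_le_of_norm_hasDerivWithin_le hderiv hbound
    (convex_Icc _ _) (Set.left_mem_Icc.mpr (by linarith)) (Set.right_mem_Icc.mpr (by linarith))
  have : ‖f ((k : ℝ) + 1) - f (k : ℝ)‖ ≤ ‖s‖ * (k : ℝ) ^ (-s.re - 1) * 1 := by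
    simpa using key
  rw [mul_one] at this
  simp only [hf] at this
  push_cast at this ⊢
  exact this

noncomputable def pzPartial (a : ℝ) (N : ℕ) (s : ℂ) : ℂ :=
  ∑ k ∈ Finset.range N, (k : ℂ) ^ (-s) * Complex.exp (2 * π * Complex.I * a) ^ k

noncomputable def pzTail (δ : ℝ) (m : ℕ) : ℝ := ∑' j : ℕ, ((j + m : ℕ) : ℝ) ^ (-δ - 1)

lemma pz_summable {δ : ℝ} (hδ : 0 < δ) : Summable (fun k : ℕ => (k : ℝ) ^ (-δ - 1)) :=
  Real.summable_nat_rpow.mpr (by linarith)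

lemma pz_cpow_norm_le {s : ℂ} {δ : ℝ} (hδ : 0 < δ) (hsδ : δ ≤ s.re) {m k : ℕ}
    (hm : 1 ≤ m) (hk : m ≤ k) : ‖(k : ℂ) ^ (-s)‖ ≤ (m : ℝ) ^ (-δ) := by
  have hk1 : 1 ≤ k := hm.trans hk
  have hm0 : (0 : ℝ) < m := by exact_mod_cast hm
  rw [Complex.norm_natCast_cpow_of_pos (by omega)]
  have h1 : (k : ℝ) ^ (-s).re ≤ (m : ℝ) ^ (-s).re := by
    apply Real.rpow_le_rpow_of_nonpos hm0 (by exact_mod_cast hk)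
    simp only [Complex.neg_re]; linarith
  refine h1.trans ?_
  apply Real.rpow_le_rpow_of_exponent_le (by exact_mod_cast hm)
  simp only [Complex.neg_re]; linarith

lemma pz_key {a δ R : ℝ} (ha : a ∈ Set.Ioo (0 : ℝ) 1) (hδ : 0 < δ) {s : ℂ}
    (hsδ : δ ≤ s.re) (hsR : ‖s‖ ≤ R) {m n : ℕ} (hm : 1 ≤ m) (hmn : m < n) :
    ‖pzPartial a n s - pzPartial a m s‖ ≤
      (2 / ‖Complex.exp (2 * π * Complex.I * a) - 1‖) *
        (2 * (m : ℝ) ^ (-δ) + R * pzTail δ m) := by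
  have hs : 0 < s.re := lt_of_lt_of_le hδ hsδ
  have hR0 : 0 ≤ R := (norm_nonneg s).trans hsR
  set w := Complex.exp (2 * π * Complex.I * a) with hw
  set C := 2 / ‖w - 1‖ with hC
  have hC0 : 0 ≤ C := by positivity
  have hG : ∀ n : ℕ, ‖∑ i ∈ Finset.range n, w ^ i‖ ≤ C := fun n => pz_geom_bound ha n
  set f : ℕ → ℂ := fun k => (k : ℂ) ^ (-s) with hf
  set g : ℕ → ℂ := fun k => w ^ k with hg
  have hdiff : pzPartial a n s - pzPartial a m s = ∑ k ∈ Finset.Ico m n, f k • g k := by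
    simp only [pzPartial, smul_eq_mul, hf, hg, ← hw]
    rw [Finset.sum_Ico_eq_sub _ hmn.le]
  rw [hdiff, Finset.sum_Ico_by_parts f g hmn]
  -- bound the three pieces
  have hfb : ∀ k : ℕ, m ≤ k → ‖f k‖ ≤ (m : ℝ) ^ (-δ) := fun k hk =>
    pz_cpow_norm_le hδ hsδ hm hk
  have hvar : ∀ k : ℕ, m ≤ k → ‖f (k + 1) - f k‖ ≤ R * (k : ℝ) ^ (-δ - 1) := by
    intro k hk
    have hk1 : 1 ≤ k := hm.trans hk
    have h1 : ‖f (k + 1) - f k‖ ≤ ‖s‖ * (k : ℝ) ^ (-s.re - 1) := by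
      have := pz_cpow_diff_bound hs hk1
      simpa [hf] using this
    refine h1.trans ?_
    have h2 : (k : ℝ) ^ (-s.re - 1) ≤ (k : ℝ) ^ (-δ - 1) :=
      Real.rpow_le_rpow_of_exponent_le (by exact_mod_cast hk1) (by linarith)
    have h3 : (0:ℝ) ≤ (k : ℝ) ^ (-s.re - 1) := Real.rpow_nonneg (by positivity) _
    exact mul_le_mul hsR h2 h3 hR0
  have hsum' : Summable (fun j : ℕ => ((j + m : ℕ) : ℝ) ^ (-δ - 1)) := by
    have := (summable_nat_add_iff (f := fun k : ℕ => (k : ℝ) ^ (-δ - 1)) m).mpr (pz_summable hδ)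
    simpa using this
  have hvarsum : ∑ k ∈ Finset.Ico m (n - 1), ‖f (k + 1) - f k‖ ≤ R * pzTail δ m := by
    calc ∑ k ∈ Finset.Ico m (n - 1), ‖f (k + 1) - f k‖
        ≤ ∑ k ∈ Finset.Ico m (n - 1), R * (k : ℝ) ^ (-δ - 1) :=
          Finset.sum_le_sum fun k hk => hvar k (Finset.mem_Ico.mp hk).1
      _ = R * ∑ k ∈ Finset.Ico m (n - 1), (k : ℝ) ^ (-δ - 1) := by rw [Finset.mul_sum]
      _ ≤ R * pzTail δ m := by
          apply mul_le_mul_of_nonneg_left ?_ hR0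
          rw [Finset.sum_Ico_eq_sum_range]
          have : ∀ i ∈ Finset.range (n - 1 - m), ((m + i : ℕ) : ℝ) ^ (-δ - 1)
              = ((i + m : ℕ) : ℝ) ^ (-δ - 1) := by intro i _; rw [add_comm]
          rw [Finset.sum_congr rfl this]
          exact Summable.sum_le_tsum _ (fun j _ => Real.rpow_nonneg (by positivity) _) hsum'
  have hb1 : ‖f (n - 1) • (∑ i ∈ Finset.range n, g i)‖ ≤ (m : ℝ) ^ (-δ) * C := by
    rw [norm_smul]
    exact mul_le_mul (hfb _ (by omega)) (hG n) (norm_nonneg _)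
      (Real.rpow_nonneg (by positivity) _)
  have hb2 : ‖f m • (∑ i ∈ Finset.range m, g i)‖ ≤ (m : ℝ) ^ (-δ) * C := by
    rw [norm_smul]
    exact mul_le_mul (hfb _ le_rfl) (hG m) (norm_nonneg _)
      (Real.rpow_nonneg (by positivity) _)
  have hb3 : ‖∑ k ∈ Finset.Ico m (n - 1), (f (k + 1) - f k) • (∑ i ∈ Finset.range (k + 1), g i)‖
      ≤ (R * pzTail δ m) * C := by
    calc ‖∑ k ∈ Finset.Ico m (n - 1), (f (k + 1) - f k) • (∑ i ∈ Finset.range (k + 1), g i)‖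
        ≤ ∑ k ∈ Finset.Ico m (n - 1), ‖(f (k + 1) - f k) • (∑ i ∈ Finset.range (k + 1), g i)‖ :=
          norm_sum_le _ _
      _ ≤ ∑ k ∈ Finset.Ico m (n - 1), ‖f (k + 1) - f k‖ * C := by
          refine Finset.sum_le_sum fun k _ => ?_
          rw [norm_smul]
          exact mul_le_mul_of_nonneg_left (hG _) (norm_nonneg _)
      _ = (∑ k ∈ Finset.Ico m (n - 1), ‖f (k + 1) - f k‖) * C := by rw [Finset.sum_mul]
      _ ≤ (R * pzTail δ m) * C := mul_le_mul_of_nonneg_right hvarsum hC0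
  calc ‖f (n - 1) • (∑ i ∈ Finset.range n, g i) - f m • (∑ i ∈ Finset.range m, g i)
        - ∑ k ∈ Finset.Ico m (n - 1), (f (k + 1) - f k) • (∑ i ∈ Finset.range (k + 1), g i)‖
      ≤ ‖f (n - 1) • (∑ i ∈ Finset.range n, g i)‖ + ‖f m • (∑ i ∈ Finset.range m, g i)‖
        + ‖∑ k ∈ Finset.Ico m (n - 1), (f (k + 1) - f k) • (∑ i ∈ Finset.range (k + 1), g i)‖ :=
        (norm_sub_le _ _).trans (by gcongr; exact norm_sub_le _ _)
    _ ≤ (m : ℝ) ^ (-δ) * C + (m : ℝ) ^ (-δ) * C + (R * pzTail δ m) * C := by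
        gcongr
    _ = C * (2 * (m : ℝ) ^ (-δ) + R * pzTail δ m) := by ring

lemma pz_bound_tendsto {a δ R : ℝ} (hδ : 0 < δ) :
    Filter.Tendsto (fun m : ℕ => (2 / ‖Complex.exp (2 * π * Complex.I * a) - 1‖) *
      (2 * (m : ℝ) ^ (-δ) + R * pzTail δ m)) atTop (nhds 0) := by
  have h1 : Filter.Tendsto (fun m : ℕ => (m : ℝ) ^ (-δ)) atTop (nhds 0) := by
    have := (tendsto_rpow_neg_atTop hδ).comp tendsto_natCast_atTop_atTop (α := ℕ)
    exact this
  have h2 : Filter.Tendsto (fun m : ℕ => pzTail δ m) atTop (nhds 0) := by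
    simpa [pzTail] using tendsto_sum_nat_add (fun k : ℕ => (k : ℝ) ^ (-δ - 1))
  have := ((h1.const_mul 2).add (h2.const_mul R)).const_mul
    (2 / ‖Complex.exp (2 * π * Complex.I * a) - 1‖)
  simpa using this

lemma pz_uniformCauchy {a δ R : ℝ} (ha : a ∈ Set.Ioo (0 : ℝ) 1) (hδ : 0 < δ) :
    UniformCauchySeqOn (pzPartial a) atTop {s : ℂ | δ ≤ s.re ∧ ‖s‖ ≤ R} := by
  rw [Metric.uniformCauchySeqOn_iff]
  intro ε hε
  have := (pz_bound_tendsto (a := a) (δ := δ) (R := R) hδ).eventually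
    (eventually_lt_nhds hε)
  obtain ⟨N₀, hN₀⟩ := (this.and (eventually_ge_atTop 1)).exists_forall_of_atTop
  refine ⟨N₀, fun p hp q hq x hx => ?_⟩
  have key : ∀ u v : ℕ, N₀ ≤ u → u ≤ v → dist (pzPartial a u x) (pzPartial a v x) < ε := by
    intro u v hu huv
    rcases eq_or_lt_of_le huv with rfl | huv'
    · simpa using hε
    · rw [dist_comm, dist_eq_norm]
      calc ‖pzPartial a v x - pzPartial a u x‖
          ≤ (2 / ‖Complex.exp (2 * π * Complex.I * a) - 1‖) *
            (2 * (u : ℝ) ^ (-δ) + R * pzTail δ u) :=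
            pz_key ha hδ hx.1 hx.2 (hN₀ u hu).2 huv'
        _ < ε := (hN₀ u hu).1
  rcases le_total p q with h | h
  · exact key p q hp h
  · rw [dist_comm]; exact key q p hq h

noncomputable def pzLim (a : ℝ) (s : ℂ) : ℂ := limUnder atTop (fun N => pzPartial a N s)

lemma pz_cauchySeq {a : ℝ} (ha : a ∈ Set.Ioo (0 : ℝ) 1) {s : ℂ} (hs : 0 < s.re) :
    CauchySeq (fun N => pzPartial a N s) :=
  (pz_uniformCauchy (δ := s.re) (R := ‖s‖) ha hs).cauchySeq ⟨le_rfl, le_rfl⟩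

lemma pz_tendsto {a : ℝ} (ha : a ∈ Set.Ioo (0 : ℝ) 1) {s : ℂ} (hs : 0 < s.re) :
    Filter.Tendsto (fun N => pzPartial a N s) atTop (nhds (pzLim a s)) :=
  (pz_cauchySeq ha hs).tendsto_limUnder

lemma pz_tendstoLocallyUniformlyOn {a : ℝ} (ha : a ∈ Set.Ioo (0 : ℝ) 1) :
    TendstoLocallyUniformlyOn (pzPartial a) (pzLim a) atTop {s : ℂ | 0 < s.re} := by
  have hopen : IsOpen {s : ℂ | 0 < s.re} := isOpen_lt continuous_const Complex.continuous_re
  rw [tendstoLocallyUniformlyOn_iff_forall_isCompact hopen]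
  intro K hKU hK
  rcases K.eq_empty_or_nonempty with rfl | hKne
  · exact tendstoUniformlyOn_empty
  obtain ⟨z, hzK, hz⟩ := hK.exists_isMinOn hKne Complex.continuous_re.continuousOn
  obtain ⟨R, hR⟩ := hK.isBounded.exists_norm_le
  have hδ : 0 < z.re := hKU hzK
  have hsub : K ⊆ {s : ℂ | z.re ≤ s.re ∧ ‖s‖ ≤ R} := fun x hx => ⟨hz hx, hR x hx⟩
  apply ((pz_uniformCauchy ha hδ).tendstoUniformlyOn_of_tendsto
    (fun x hx => pz_tendsto ha (lt_of_lt_of_le hδ hx.1))).mono hsub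

lemma pz_differentiableOn {a : ℝ} (ha : a ∈ Set.Ioo (0 : ℝ) 1) :
    DifferentiableOn ℂ (pzLim a) {s : ℂ | 0 < s.re} := by
  have hopen : IsOpen {s : ℂ | 0 < s.re} := isOpen_lt continuous_const Complex.continuous_re
  apply (pz_tendstoLocallyUniformlyOn ha).differentiableOn ?_ hopen
  filter_upwards with N
  apply DifferentiableOn.fun_sum
  intro k _
  rcases Nat.eq_zero_or_pos k with rfl | hk
  · apply (differentiableOn_const 0).congr
    intro s hs
    have hs0 : -s ≠ 0 := by
      simp only [ne_eq, neg_eq_zero]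
      intro h; rw [h] at hs; simp at hs
    simp [Complex.zero_cpow hs0]
  · have hk0 : (k : ℂ) ≠ 0 := Nat.cast_ne_zero.mpr (by omega)
    exact ((differentiable_neg.const_cpow (Or.inl hk0)).mul_const _).differentiableOn

lemma pz_eq_expZeta {a : ℝ} (ha : a ∈ Set.Ioo (0 : ℝ) 1) {s : ℂ} (hs : 0 < s.re) :
    pzLim a s = HurwitzZeta.expZeta (a : UnitAddCircle) s := by
  have hopen : IsOpen {s : ℂ | 0 < s.re} := isOpen_lt continuous_const Complex.continuous_re
  have ha0 : (a : UnitAddCircle) ≠ 0 := by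
    intro h
    rw [AddCircle.coe_eq_zero_iff] at h
    obtain ⟨n, hn⟩ := h
    simp only [zsmul_eq_mul, mul_one] at hn
    obtain ⟨h0, h1⟩ := ha
    rw [← hn] at h0 h1
    have : (0 : ℤ) < n := by exact_mod_cast h0
    have : n < 1 := by exact_mod_cast h1
    omega
  -- both sides analytic on the half-plane
  have hA1 : AnalyticOnNhd ℂ (pzLim a) {s : ℂ | 0 < s.re} :=
    (pz_differentiableOn ha).analyticOnNhd hopen
  have hA2 : AnalyticOnNhd ℂ (HurwitzZeta.expZeta (a : UnitAddCircle)) {s : ℂ | 0 < s.re} :=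
    ((HurwitzZeta.differentiable_expZeta_of_ne_zero ha0).differentiableOn).analyticOnNhd hopen
  -- they agree for re > 1
  have hagree : ∀ z : ℂ, 1 < z.re → pzLim a z = HurwitzZeta.expZeta (a : UnitAddCircle) z := by
    intro z hz
    have h1 : Filter.Tendsto (fun N => pzPartial a N z) atTop
        (nhds (HurwitzZeta.expZeta (a : UnitAddCircle) z)) := by
      have := (HurwitzZeta.hasSum_expZeta_of_one_lt_re a hz).tendsto_sum_nat
      apply this.congr
      intro N
      apply Finset.sum_congr rfl
      intro k _
      rcases Nat.eq_zero_or_pos k with rfl | hk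
      · have hz0 : z ≠ 0 := fun h => by rw [h, Complex.zero_re] at hz; linarith
        simp [Complex.zero_cpow (neg_ne_zero.mpr hz0), Complex.zero_cpow hz0]
      · have hk0 : (k : ℂ) ≠ 0 := Nat.cast_ne_zero.mpr (by omega)
        rw [Complex.cpow_neg, ← Complex.exp_nat_mul, div_eq_mul_inv, mul_comm]
        ring_nf
    exact tendsto_nhds_unique (pz_tendsto ha (by linarith)) h1
  have hconn : IsPreconnected {s : ℂ | 0 < s.re} :=
    (convex_halfSpace_re_gt 0).isPreconnected
  have h2mem : (2 : ℂ) ∈ {s : ℂ | 0 < s.re} := by simp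
  have hev : pzLim a =ᶠ[nhds 2] HurwitzZeta.expZeta (a : UnitAddCircle) := by
    have : {s : ℂ | 1 < s.re} ∈ nhds (2 : ℂ) := by
      apply (isOpen_lt continuous_const Complex.continuous_re).mem_nhds
      simp
    filter_upwards [this] with z hz using hagree z hz
  exact hA1.eqOn_of_preconnected_of_eventuallyEq hA2 hconn h2mem hev hs


/-- for `0 < Re s < 1`, `|Im s| > 1` and `a ∈ (0,1)`, the radial Abel means
of the series `∑_{k≥1} k^{-s} e^{2πika}` converge to `F_s(a)` as `r → 1⁻`. -/
theorem periodizedZeta_abel_limit (s : ℂ) (hσ0 : 0 < s.re) (hσ1 : s.re < 1) (ht : 1 < |s.im|)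
    (a : ℝ) (ha : a ∈ Set.Ioo (0 : ℝ) 1) :
    Filter.Tendsto
      (fun r : ℝ =>
        ∑' k : ℕ+, (k : ℂ) ^ (-s) * (r : ℂ) ^ (k : ℕ) * Complex.exp (2 * π * Complex.I * k * a))
      (nhdsWithin 1 (Set.Iio 1)) (nhds (periodizedZeta s a)) := by
  have hs0 : s ≠ 0 := fun h => by rw [h, Complex.zero_re] at hσ0; linarith
  set f : ℕ → ℂ := fun n => (n : ℂ) ^ (-s) * Complex.exp (2 * π * Complex.I * a) ^ n with hf
  have habel : Filter.Tendsto (fun n => ∑ i ∈ Finset.range n, f i) atTop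
      (nhds (periodizedZeta s a)) := by
    have h := pz_tendsto ha hσ0
    rw [pz_eq_expZeta ha hσ0] at h
    exact h
  have h2 := Complex.tendsto_tsum_powerSeries_nhdsWithin_lt habel
  rw [Filter.tendsto_map'_iff] at h2
  apply h2.congr
  intro r
  show (∑' n : ℕ, f n * (r : ℂ) ^ n) = _
  have hkey : ∀ k : ℕ+, (k : ℂ) ^ (-s) * (r : ℂ) ^ (k : ℕ) *
      Complex.exp (2 * π * Complex.I * k * a) = f (k : ℕ) * (r : ℂ) ^ (k : ℕ) := by
    intro k
    have hexp : Complex.exp (2 * π * Complex.I * a) ^ (k : ℕ)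
        = Complex.exp (2 * π * Complex.I * k * a) := by
      rw [← Complex.exp_nat_mul]
      congr 1
      push_cast
      ring
    rw [hf]
    simp only []
    rw [hexp]
    push_cast
    ring
  have hrw : (∑' k : ℕ+, (k : ℂ) ^ (-s) * (r : ℂ) ^ (k : ℕ) *
      Complex.exp (2 * π * Complex.I * k * a))
      = ∑' k : ℕ+, (fun n : ℕ => f n * (r : ℂ) ^ n) ((k : ℕ+) : ℕ) := tsum_congr hkey
  rw [hrw]
  refine (Function.Injective.tsum_eq (g := fun k : ℕ+ => ((k : ℕ+) : ℕ))
    (fun x y h => PNat.coe_injective h) ?_).symm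
  intro n hn
  rcases Nat.eq_zero_or_pos n with rfl | hpos
  · exfalso
    apply Function.mem_support.mp hn
    simp [hf, Complex.zero_cpow (neg_ne_zero.mpr hs0)]
  · exact ⟨⟨n, hpos⟩, rfl⟩
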